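/- Let X_j be a random vector in ℝ^k with identity covariance matrix, zero mean, and δ_j^4 = E‖X_j‖^4 < ∞, let θ_j ∈ ℝ, Y_j = X_j·1{‖θ_j X_j‖ ≤ 1}, Z_j = Y_j − E Y_j. Then for every multi-index ν with |ν| = 3, the mixed moment μ_ν(Z_j) = E Z_j^ν satisfies (μ_ν(Z_j))² ≤ 2^6·δ_j^4. -/

import Mathlib

open MeasureTheory ProbabilityTheory Real
open scoped BigOperators

/-- Truncation `Y = X·1{‖c X‖ ≤ 1}`. -/
noncomputable def truncV {Ω : Type*} {k : ℕ} (X : Ω → EuclideanSpace ℝ (Fin k)) (c : ℝ) :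
    Ω → EuclideanSpace ℝ (Fin k) :=
  fun ω => if ‖c • X ω‖ ≤ 1 then X ω else 0

/-- Centering `Z = Y − E Y`. -/
noncomputable def ctrV {Ω : Type*} [MeasurableSpace Ω] (μ : Measure Ω) {k : ℕ}
    (Y : Ω → EuclideanSpace ℝ (Fin k)) : Ω → EuclideanSpace ℝ (Fin k) :=
  fun ω => Y ω - ∫ ω', Y ω' ∂μ

lemma coord_abs_le {k : ℕ} (x : EuclideanSpace ℝ (Fin k)) (i : Fin k) : |x i| ≤ ‖x‖ := by
  rw [EuclideanSpace.norm_eq, show |x i| = Real.sqrt ((x i)^2) by rw [Real.sqrt_sq_eq_abs]]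
  apply Real.sqrt_le_sqrt
  have := Finset.single_le_sum (f := fun j => ‖x j‖^2) (fun j _ => sq_nonneg _)
      (Finset.mem_univ i)
  simpa [Real.norm_eq_abs, sq_abs] using this

lemma exists_three {k : ℕ} (ν : Fin k → ℕ) (hν : ∑ i, ν i = 3) :
    ∃ a b c : Fin k, ∀ z : Fin k → ℝ, ∏ i, z i ^ ν i = z a * z b * z c := by
  set m : Multiset (Fin k) := Finset.univ.val.bind (fun i => Multiset.replicate (ν i) i) with hm
  have hcard : Multiset.card m = 3 := by
    rw [hm, Multiset.card_bind, ← hν, Finset.sum_eq_multiset_sum]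
    refine congrArg _ (Multiset.map_congr rfl fun i _ => by simp)
  obtain ⟨a, b, c, habc⟩ := Multiset.card_eq_three.mp hcard
  refine ⟨a, b, c, fun z => ?_⟩
  have h1 : ∏ i, z i ^ ν i = (m.map z).prod := by
    rw [hm, Multiset.map_bind, Multiset.prod_bind, Finset.prod_eq_multiset_prod]
    refine congrArg _ (Multiset.map_congr rfl fun i _ => by
      simp [Multiset.map_replicate, Multiset.prod_replicate]).symm
  rw [h1, habc]
  simp [mul_assoc]

lemma amgm3 (x y z : ℝ) : |x * y * z| ≤ (|x| ^ 3 + |y| ^ 3 + |z| ^ 3) / 3 := by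
  have hp := abs_nonneg x; have hq := abs_nonneg y; have hr := abs_nonneg z
  have h : |x * y * z| = |x| * |y| * |z| := by rw [abs_mul, abs_mul]
  rw [h]
  nlinarith [mul_nonneg (add_nonneg (add_nonneg hp hq) hr) (sq_nonneg (|x| - |y|)),
    mul_nonneg (add_nonneg (add_nonneg hp hq) hr) (sq_nonneg (|y| - |z|)),
    mul_nonneg (add_nonneg (add_nonneg hp hq) hr) (sq_nonneg (|z| - |x|))]

lemma cube_bound (a t : ℝ) (ha : 0 < a) : |t| ^ 3 ≤ (a^2*t^2 + t^4)/(2*a) := by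
  rw [le_div_iff₀ (by linarith)]
  nlinarith [mul_nonneg (sq_nonneg t) (sq_nonneg (|t| - a)), sq_abs t, abs_nonneg t]

lemma quart_bound (x y : ℝ) : (x - y)^4 ≤ 8*x^4 + 8*y^4 := by
  nlinarith [sq_nonneg (x+y), sq_nonneg (x-y), sq_nonneg (x^2-y^2), sq_nonneg (x^2+y^2),
    sq_nonneg x, sq_nonneg y, sq_nonneg (x*y)]

lemma le_one_add_pow4 (t : ℝ) : t ≤ 1 + t^4 := by
  nlinarith [sq_nonneg (t^2-1), sq_nonneg (t-1), sq_nonneg t, sq_nonneg (t+1)]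

lemma sq_le_one_add_pow4 (t : ℝ) : t^2 ≤ 1 + t^4 := by nlinarith [sq_nonneg (t^2-1)]

lemma cube_le_one_add_pow4 (t : ℝ) : t^3 ≤ 1 + t^4 := by
  nlinarith [sq_nonneg (t^2-t), sq_nonneg (t^2-1)]

lemma pb2 (t : ℝ) : (t+1)^2 ≤ 9*(1+t^4) := by
  nlinarith [sq_le_one_add_pow4 (t+1), quart_bound t (-1)]

lemma pb4 (t : ℝ) : (t+1)^4 ≤ 9*(1+t^4) := by
  have h := quart_bound t (-1)
  norm_num at h
  nlinarith [sq_le_one_add_pow4 t]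

lemma pb3 (t : ℝ) : (t+1)^3 ≤ 9*(1+t^4) := by
  nlinarith [sq_nonneg (t^2-t), sq_nonneg (t^2-1), sq_nonneg (t-1), sq_nonneg (t+1),
    sq_nonneg (t^2+t), sq_nonneg t, sq_nonneg (t^2-2), sq_nonneg (2*t^2-1), sq_nonneg (t^2+t-1)]

/-- third mixed moments of the truncated centered vector satisfy
`(μ_ν(Z))² ≤ 2⁶ δ⁴` for every multi-index `ν` with `|ν| = 3`. -/
theorem third_mixed_moment_sq_bound
    {Ω : Type*} [MeasurableSpace Ω] {μ : Measure Ω} [IsProbabilityMeasure μ]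
    {k : ℕ} (X : Ω → EuclideanSpace ℝ (Fin k))
    (hmeas : Measurable X)
    (hmean : ∫ ω, X ω ∂μ = 0)
    (hcov : ∀ i l : Fin k, ∫ ω, X ω i * X ω l ∂μ = if i = l then 1 else 0)
    (hmom : Integrable (fun ω => ‖X ω‖ ^ 4) μ)
    (θ : ℝ) (ν : Fin k → ℕ) (hν : ∑ i, ν i = 3) :
    (∫ ω, ∏ i, (ctrV μ (truncV X θ) ω i) ^ ν i ∂μ) ^ 2 ≤
      2 ^ 6 * ∫ ω, ‖X ω‖ ^ 4 ∂μ := by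
  classical
  obtain ⟨a, b, c, habc⟩ := exists_three ν hν
  set D := ∫ ω, ‖X ω‖ ^ 4 ∂μ with hDdef
  set Y := truncV X θ with hYdef
  have hYmeas : Measurable Y := by
    rw [hYdef]; unfold truncV
    exact Measurable.ite (measurableSet_le ((hmeas.const_smul θ).norm) measurable_const)
      hmeas measurable_const
  have hXi : ∀ i : Fin k, Measurable (fun ω => X ω i) :=
    fun i => (measurable_pi_apply i).comp ((WithLp.measurable_ofLp _ _).comp hmeas)
  have hYi : ∀ i : Fin k, Measurable (fun ω => Y ω i) :=
    fun i => (measurable_pi_apply i).comp ((WithLp.measurable_ofLp _ _).comp hYmeas)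
  have hYle : ∀ ω, ‖Y ω‖ ≤ ‖X ω‖ := by
    intro ω; rw [hYdef]; unfold truncV
    split
    · exact le_rfl
    · simp
  have hYci : ∀ ω (i : Fin k), |Y ω i| ≤ |X ω i| := by
    intro ω i; rw [hYdef]; unfold truncV; dsimp only
    split
    · exact le_rfl
    · simp [PiLp.zero_apply]
  -- integrability infrastructure
  have h1mom : Integrable (fun ω => 1 + ‖X ω‖^4) μ := (integrable_const 1).add hmom
  have hdom : ∀ (f : Ω → ℝ) (C : ℝ), Measurable f → (∀ ω, |f ω| ≤ C*(1 + ‖X ω‖^4)) →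
      Integrable f μ := fun f C hf hb =>
    Integrable.mono' (h1mom.const_mul C) hf.aestronglyMeasurable
      (ae_of_all _ fun ω => by rw [Real.norm_eq_abs]; exact hb ω)
  have hYint : Integrable Y μ :=
    Integrable.mono' h1mom hYmeas.aestronglyMeasurable
      (ae_of_all _ fun ω => (hYle ω).trans (le_one_add_pow4 _))
  set cY := ∫ ω, Y ω ∂μ with hcYdef
  have hci : ∀ i : Fin k, cY i = ∫ ω, Y ω i ∂μ := by
    intro i
    have h := (EuclideanSpace.proj (𝕜 := ℝ) i).integral_comp_comm hYint
    simpa [PiLp.proj_apply] using h.symm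
  have hZeq : ∀ ω (i : Fin k), ctrV μ Y ω i = Y ω i - cY i := fun ω i => rfl
  have habsX : ∀ ω (i : Fin k), |X ω i| ≤ ‖X ω‖ := fun ω i => coord_abs_le (X ω) i
  have habsY : ∀ ω (i : Fin k), |Y ω i| ≤ ‖X ω‖ := fun ω i => (hYci ω i).trans (habsX ω i)
  have hXi2int : ∀ i : Fin k, Integrable (fun ω => (X ω i)^2) μ := by
    intro i
    refine hdom _ 1 ((hXi i).pow_const 2) fun ω => ?_
    rw [one_mul, abs_of_nonneg (sq_nonneg _), ← sq_abs]
    exact (pow_le_pow_left₀ (abs_nonneg _) (habsX ω i) 2).trans (sq_le_one_add_pow4 _)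
  have hYi2int : ∀ i : Fin k, Integrable (fun ω => (Y ω i)^2) μ := by
    intro i
    refine hdom _ 1 ((hYi i).pow_const 2) fun ω => ?_
    rw [one_mul, abs_of_nonneg (sq_nonneg _), ← sq_abs]
    exact (pow_le_pow_left₀ (abs_nonneg _) (habsY ω i) 2).trans (sq_le_one_add_pow4 _)
  have hYi4int : ∀ i : Fin k, Integrable (fun ω => (Y ω i)^4) μ := by
    intro i
    refine hdom _ 1 ((hYi i).pow_const 4) fun ω => ?_
    have he : (Y ω i)^4 = |Y ω i|^4 := by rw [← abs_pow, abs_of_nonneg (by positivity)]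
    rw [one_mul, abs_of_nonneg (by positivity : (0:ℝ) ≤ (Y ω i)^4), he]
    calc |Y ω i|^4 ≤ ‖X ω‖^4 := pow_le_pow_left₀ (abs_nonneg _) (habsY ω i) 4
      _ ≤ 1 + ‖X ω‖^4 := by linarith
  have hYiint : ∀ i : Fin k, Integrable (fun ω => Y ω i) μ := by
    intro i
    refine hdom _ 1 (hYi i) fun ω => ?_
    rw [one_mul]
    exact (habsY ω i).trans (le_one_add_pow4 _)
  have hXiabsint : ∀ i : Fin k, Integrable (fun ω => |X ω i|) μ := by
    intro i
    refine hdom _ 1 ((hXi i).abs) fun ω => ?_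
    rw [one_mul, abs_abs]
    exact (habsX ω i).trans (le_one_add_pow4 _)
  have hYiabsint : ∀ i : Fin k, Integrable (fun ω => |Y ω i|) μ := by
    intro i
    refine hdom _ 1 ((hYi i).abs) fun ω => ?_
    rw [one_mul, abs_abs]
    exact (habsY ω i).trans (le_one_add_pow4 _)
  have hXi2eq : ∀ i : Fin k, ∫ ω, (X ω i)^2 ∂μ = 1 := by
    intro i
    have h := hcov i i
    rw [if_pos rfl] at h
    rw [← h]
    exact integral_congr_ae (ae_of_all _ fun ω => by ring)
  have hcabs : ∀ i : Fin k, |cY i| ≤ 1 := by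
    intro i
    rw [hci i]
    have h1 : |∫ ω, Y ω i ∂μ| ≤ ∫ ω, |Y ω i| ∂μ := by
      simpa [Real.norm_eq_abs] using norm_integral_le_integral_norm (μ := μ) (fun ω => Y ω i)
    have h2 : ∫ ω, |Y ω i| ∂μ ≤ ∫ ω, |X ω i| ∂μ :=
      integral_mono (hYiabsint i) (hXiabsint i) (fun ω => hYci ω i)
    have h3 : ∫ ω, |X ω i| ∂μ ≤ ∫ ω, (1 + (X ω i)^2)/2 ∂μ := by
      refine integral_mono (hXiabsint i) (((integrable_const 1).add (hXi2int i)).div_const 2)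
        (fun ω => ?_)
      nlinarith [sq_nonneg (|X ω i| - 1), sq_abs (X ω i)]
    have h4 : ∫ ω, (1 + (X ω i)^2)/2 ∂μ = 1 := by
      rw [integral_div, integral_add (integrable_const 1) (hXi2int i), integral_const,
        hXi2eq i]
      simp
    linarith
  have hk : k ≠ 0 := by
    rintro rfl
    simp at hν
  have hD1 : 1 ≤ D := by
    obtain ⟨i0⟩ : Nonempty (Fin k) := ⟨⟨0, Nat.pos_of_ne_zero hk⟩⟩
    have hpt : ∀ ω, (X ω i0)^2 ≤ (1 + ‖X ω‖^4)/2 := by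
      intro ω
      have h1 : (X ω i0)^2 ≤ ‖X ω‖^2 := by
        rw [← sq_abs]
        exact pow_le_pow_left₀ (abs_nonneg _) (habsX ω i0) 2
      nlinarith [sq_nonneg (‖X ω‖^2 - 1)]
    have h := integral_mono (hXi2int i0) (h1mom.div_const 2) hpt
    rw [hXi2eq i0, integral_div, integral_add (integrable_const 1) hmom, integral_const] at h
    simp at h
    linarith
  have hD0 : (0:ℝ) < D := by linarith
  set s := Real.sqrt D with hsdef
  have hss : s * s = D := Real.mul_self_sqrt hD0.le
  have hs1 : 1 ≤ s := by
    rw [hsdef, show (1:ℝ) = Real.sqrt 1 from Real.sqrt_one.symm]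
    exact Real.sqrt_le_sqrt hD1
  have hspos : (0:ℝ) < s := lt_of_lt_of_le one_pos hs1
  -- Z coordinate facts
  have hZm : ∀ i : Fin k, Measurable (fun ω => Y ω i - cY i) :=
    fun i => (hYi i).sub measurable_const
  have hZabs : ∀ ω (i : Fin k), |Y ω i - cY i| ≤ ‖X ω‖ + 1 := by
    intro ω i
    calc |Y ω i - cY i| ≤ |Y ω i| + |cY i| := abs_sub _ _
      _ ≤ ‖X ω‖ + 1 := add_le_add (habsY ω i) (hcabs i)
  have hZ2int : ∀ i : Fin k, Integrable (fun ω => (Y ω i - cY i)^2) μ := by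
    intro i
    refine hdom _ 9 ((hZm i).pow_const 2) fun ω => ?_
    rw [abs_of_nonneg (sq_nonneg _), ← sq_abs]
    exact (pow_le_pow_left₀ (abs_nonneg _) (hZabs ω i) 2).trans (pb2 _)
  have hZ4int : ∀ i : Fin k, Integrable (fun ω => (Y ω i - cY i)^4) μ := by
    intro i
    refine hdom _ 9 ((hZm i).pow_const 4) fun ω => ?_
    have he : (Y ω i - cY i)^4 = |Y ω i - cY i|^4 := by
      rw [← abs_pow, abs_of_nonneg (by positivity)]
    rw [abs_of_nonneg (by positivity : (0:ℝ) ≤ (Y ω i - cY i)^4), he]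
    exact (pow_le_pow_left₀ (abs_nonneg _) (hZabs ω i) 4).trans (pb4 _)
  have hZ3int : ∀ i : Fin k, Integrable (fun ω => |Y ω i - cY i|^3) μ := by
    intro i
    refine hdom _ 9 ((hZm i).abs.pow_const 3) fun ω => ?_
    rw [abs_of_nonneg (by positivity : (0:ℝ) ≤ |Y ω i - cY i|^3)]
    exact (pow_le_pow_left₀ (abs_nonneg _) (hZabs ω i) 3).trans (pb3 _)
  -- second moments of Z at most 1
  have hZ2le : ∀ i : Fin k, ∫ ω, (Y ω i - cY i)^2 ∂μ ≤ 1 := by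
    intro i
    have e1 : ∫ ω, (Y ω i - cY i)^2 ∂μ = ∫ ω, (Y ω i)^2 ∂μ - (cY i)^2 := by
      have hpt : (fun ω => (Y ω i - cY i)^2)
          = fun ω => ((Y ω i)^2 - (2*cY i) * (Y ω i)) + (cY i)^2 := by
        funext ω; ring
      have i1 : Integrable (fun ω => (Y ω i)^2 - (2*cY i) * (Y ω i)) μ :=
        (hYi2int i).sub ((hYiint i).const_mul (2*cY i))
      have i2 : Integrable (fun ω => (2*cY i) * (Y ω i)) μ := (hYiint i).const_mul (2*cY i)
      rw [hpt, integral_add i1 (integrable_const _),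
        integral_sub (hYi2int i) i2, integral_const_mul, ← hci i,
        integral_const]
      simp
      ring
    have h2 : ∫ ω, (Y ω i)^2 ∂μ ≤ ∫ ω, (X ω i)^2 ∂μ := by
      refine integral_mono (hYi2int i) (hXi2int i) (fun ω => ?_)
      rw [← sq_abs (Y ω i), ← sq_abs (X ω i)]
      exact pow_le_pow_left₀ (abs_nonneg _) (hYci ω i) 2
    rw [e1]
    have h3 := hXi2eq i
    nlinarith [sq_nonneg (cY i)]
  -- fourth moments of Z at most 16 D
  have hZ4le : ∀ i : Fin k, ∫ ω, (Y ω i - cY i)^4 ∂μ ≤ 16 * D := by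
    intro i
    have i3 : Integrable (fun ω => 8*(Y ω i)^4) μ := (hYi4int i).const_mul 8
    have h1 : ∫ ω, (Y ω i - cY i)^4 ∂μ ≤ ∫ ω, (8*(Y ω i)^4 + 8*(cY i)^4) ∂μ :=
      integral_mono (hZ4int i) (i3.add (integrable_const _))
        (fun ω => quart_bound _ _)
    have h2 : ∫ ω, (8*(Y ω i)^4 + 8*(cY i)^4) ∂μ
        = 8 * ∫ ω, (Y ω i)^4 ∂μ + 8*(cY i)^4 := by
      rw [integral_add i3 (integrable_const _), integral_const_mul,
        integral_const]
      simp
    have h3 : ∫ ω, (Y ω i)^4 ∂μ ≤ D := by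
      refine integral_mono (hYi4int i) hmom (fun ω => ?_)
      have he : (Y ω i)^4 = |Y ω i|^4 := by rw [← abs_pow, abs_of_nonneg (by positivity)]
      rw [he]
      exact pow_le_pow_left₀ (abs_nonneg _) (habsY ω i) 4
    have h4 : (cY i)^4 ≤ 1 := by
      have he : (cY i)^4 = |cY i|^4 := by rw [← abs_pow, abs_of_nonneg (by positivity)]
      rw [he]
      exact pow_le_one₀ (abs_nonneg _) (hcabs i)
    linarith
  -- third absolute moments of Z at most 4 s
  have hZ3le : ∀ i : Fin k, ∫ ω, |Y ω i - cY i|^3 ∂μ ≤ 4 * s := by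
    intro i
    have ha : (0:ℝ) < 4*s := by linarith
    have i4 : Integrable (fun ω => (4*s)^2*(Y ω i - cY i)^2) μ := (hZ2int i).const_mul ((4*s)^2)
    have i5 : Integrable (fun ω => (4*s)^2*(Y ω i - cY i)^2 + (Y ω i - cY i)^4) μ :=
      i4.add (hZ4int i)
    have h1 : ∫ ω, |Y ω i - cY i|^3 ∂μ
        ≤ ∫ ω, ((4*s)^2*(Y ω i - cY i)^2 + (Y ω i - cY i)^4)/(2*(4*s)) ∂μ :=
      integral_mono (hZ3int i) (i5.div_const _)
        (fun ω => cube_bound (4*s) _ ha)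
    have h2 : ∫ ω, ((4*s)^2*(Y ω i - cY i)^2 + (Y ω i - cY i)^4)/(2*(4*s)) ∂μ
        = ((4*s)^2 * ∫ ω, (Y ω i - cY i)^2 ∂μ + ∫ ω, (Y ω i - cY i)^4 ∂μ)/(2*(4*s)) := by
      rw [integral_div, integral_add i4 (hZ4int i), integral_const_mul]
    have h3 : ((4*s)^2 * ∫ ω, (Y ω i - cY i)^2 ∂μ + ∫ ω, (Y ω i - cY i)^4 ∂μ)/(2*(4*s))
        ≤ ((4*s)^2 * 1 + 16*D)/(2*(4*s)) := by
      gcongr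
      · exact hZ2le i
      · exact hZ4le i
    have h4 : ((4*s)^2 * 1 + 16*D)/(2*(4*s)) = 4*s := by
      rw [← hss]
      field_simp
      ring
    linarith
  -- the product
  have hprod : ∀ ω, ∏ i, (ctrV μ Y ω i)^ν i
      = (Y ω a - cY a) * ((Y ω b - cY b) * (Y ω c - cY c)) := by
    intro ω
    have h := habc (fun i => ctrV μ Y ω i)
    simp only [hZeq] at h
    rw [← mul_assoc]
    exact h
  have hWm : Measurable (fun ω => ∏ i, (ctrV μ Y ω i)^ν i) := by
    have : (fun ω => ∏ i, (ctrV μ Y ω i)^ν i)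
        = fun ω => (Y ω a - cY a) * ((Y ω b - cY b) * (Y ω c - cY c)) := funext hprod
    rw [this]
    exact (hZm a).mul ((hZm b).mul (hZm c))
  have hgint : Integrable (fun ω =>
      (|Y ω a - cY a|^3 + |Y ω b - cY b|^3 + |Y ω c - cY c|^3)/3) μ :=
    (((hZ3int a).add (hZ3int b)).add (hZ3int c)).div_const 3
  have hW1 : |∫ ω, ∏ i, (ctrV μ Y ω i)^ν i ∂μ| ≤ ∫ ω, |∏ i, (ctrV μ Y ω i)^ν i| ∂μ := by
    have h := norm_integral_le_integral_norm (μ := μ) (fun ω => ∏ i, (ctrV μ Y ω i)^ν i)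
    simp only [Real.norm_eq_abs] at h
    exact h
  have hW2 : ∫ ω, |∏ i, (ctrV μ Y ω i)^ν i| ∂μ
      ≤ ∫ ω, (|Y ω a - cY a|^3 + |Y ω b - cY b|^3 + |Y ω c - cY c|^3)/3 ∂μ := by
    refine integral_mono_of_nonneg (ae_of_all _ fun ω => abs_nonneg _) hgint
      (ae_of_all _ fun ω => ?_)
    dsimp only
    rw [hprod ω, ← mul_assoc]
    exact amgm3 _ _ _
  have hW3 : ∫ ω, (|Y ω a - cY a|^3 + |Y ω b - cY b|^3 + |Y ω c - cY c|^3)/3 ∂μ ≤ 4*s := by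
    have iab : Integrable (fun ω => |Y ω a - cY a|^3 + |Y ω b - cY b|^3) μ :=
      (hZ3int a).add (hZ3int b)
    rw [integral_div, integral_add iab (hZ3int c), integral_add (hZ3int a) (hZ3int b)]
    have := hZ3le a; have := hZ3le b; have := hZ3le c
    linarith
  have hWle : |∫ ω, ∏ i, (ctrV μ Y ω i)^ν i ∂μ| ≤ 4*s := le_trans hW1 (le_trans hW2 hW3)
  calc (∫ ω, ∏ i, (ctrV μ Y ω i)^ν i ∂μ)^2
      = |∫ ω, ∏ i, (ctrV μ Y ω i)^ν i ∂μ|^2 := (sq_abs _).symm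
    _ ≤ (4*s)^2 := pow_le_pow_left₀ (abs_nonneg _) hWle 2
    _ = 16*(s*s) := by ring
    _ = 16*D := by rw [hss]
    _ ≤ 2^6*D := by norm_num; linarith
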